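/- Let R be a commutative ring containing ℚ and A = M_k(R[[λ]]) with a deformed product ⋆ reducing to matrix multiplication mod λ. If H = 1 + Σ_{r≥1} λ^r H_r ∈ A, then there exists U = 1 + Σ_{r≥1} λ^r U_r ∈ A with U* ⋆ U = H, provided A carries a *-involution with (a⋆b)* = b*⋆a*, conjugation reduces to the classical one mod λ, and H is Hermitian (H* = H). (Construct U recursively: U = 1 + ½λ H₁ + ….) -/
import Mathlib


/- STATEMENT 16: Let R be a commutative *-ring containing ℚ and consider the matrix
   algebra A = M_k(R[[λ]]) with a deformed associative product ⋆ reducing to matrix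
   multiplication mod λ, carrying a *-involution J with (a ⋆ b)* = b* ⋆ a*, λ* = λ,
   reducing to the classical conjugate-transpose mod λ.  If H = 1 + Σ_{r≥1} λ^r H_r is
   Hermitian (J H = H), then there exists U = 1 + Σ_{r≥1} λ^r U_r with U* ⋆ U = H.
   Series of matrices are modeled as ℕ → M_k(R); ⋆ is given by cochains C_r extended by
   convolution; λ-multiplication is `lamShift`. -/

/-- Multiplication by λ. -/
def lamShift {A : Type*} [AddCommMonoid A] (a : ℕ → A) : ℕ → A :=
  fun n => if n = 0 then 0 else a (n - 1)

/-- Extension of the cochains `C_r` to the product on series. -/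
def smulS {A : Type*} [Ring A] (C : ℕ → A → A → A) (a b : ℕ → A) : ℕ → A :=
  fun n => ∑ p ∈ Finset.Nat.antidiagonalTuple 3 n, C (p 0) (a (p 1)) (b (p 2))

section Aux

variable {R : Type*} [CommRing R] [StarRing R] [Algebra ℚ R] {k : ℕ}

/-- The constant series 1. -/
def oneS : ℕ → Matrix (Fin k) (Fin k) R := fun m => if m = 0 then 1 else 0

/-- One correction step in the recursive construction of the square root. -/
def stepS (C : ℕ → Matrix (Fin k) (Fin k) R → Matrix (Fin k) (Fin k) R → Matrix (Fin k) (Fin k) R)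
    (J : (ℕ → Matrix (Fin k) (Fin k) R) → (ℕ → Matrix (Fin k) (Fin k) R))
    (H W : ℕ → Matrix (Fin k) (Fin k) R) (n : ℕ) : ℕ → Matrix (Fin k) (Fin k) R :=
  fun m => if m = n + 1 then (1/2 : ℚ) • (H (n+1) - smulS C (J W) W (n+1)) else 0

/-- The successive approximants to the square root. -/
def VS (C : ℕ → Matrix (Fin k) (Fin k) R → Matrix (Fin k) (Fin k) R → Matrix (Fin k) (Fin k) R)
    (J : (ℕ → Matrix (Fin k) (Fin k) R) → (ℕ → Matrix (Fin k) (Fin k) R))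
    (H : ℕ → Matrix (Fin k) (Fin k) R) : ℕ → (ℕ → Matrix (Fin k) (Fin k) R)
  | 0 => oneS
  | n+1 => VS C J H n + stepS C J H (VS C J H n) n

theorem VS_succ (C : ℕ → Matrix (Fin k) (Fin k) R → Matrix (Fin k) (Fin k) R → Matrix (Fin k) (Fin k) R)
    (J : (ℕ → Matrix (Fin k) (Fin k) R) → (ℕ → Matrix (Fin k) (Fin k) R))
    (H : ℕ → Matrix (Fin k) (Fin k) R) (n : ℕ) :
    VS C J H (n+1) = VS C J H n + stepS C J H (VS C J H n) n := rfl

theorem star_half_smul (X : Matrix (Fin k) (Fin k) R) :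
    ((1/2 : ℚ) • X).conjTranspose = (1/2 : ℚ) • X.conjTranspose := by
  ext i j
  simp only [Matrix.conjTranspose_apply, Matrix.smul_apply]
  rw [Algebra.smul_def, Algebra.smul_def, star_mul']
  congr 1
  have h : (starRingEnd R).comp (algebraMap ℚ R) = algebraMap ℚ R := Subsingleton.elim _ _
  exact RingHom.congr_fun h _

end Aux

theorem deformed_square_root_of_hermitian
    {R : Type*} [CommRing R] [StarRing R] [Algebra ℚ R] {k : ℕ}
    (C : ℕ → Matrix (Fin k) (Fin k) R → Matrix (Fin k) (Fin k) R → Matrix (Fin k) (Fin k) R)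
    (hC0 : ∀ a b, C 0 a b = a * b)
    (haddl : ∀ r a a' b, C r (a + a') b = C r a b + C r a' b)
    (haddr : ∀ r a b b', C r a (b + b') = C r a b + C r a b')
    (hassoc : ∀ a b c, smulS C (smulS C a b) c = smulS C a (smulS C b c))
    (J : (ℕ → Matrix (Fin k) (Fin k) R) → (ℕ → Matrix (Fin k) (Fin k) R))
    (hJadd : ∀ a b, J (a + b) = J a + J b)
    (hJinvol : ∀ a, J (J a) = a)
    (hJshift : ∀ a, J (lamShift a) = lamShift (J a))
    (hJmul : ∀ a b, J (smulS C a b) = smulS C (J b) (J a))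
    (hJ0 : ∀ a, (J a) 0 = (a 0).conjTranspose)
    (H : ℕ → Matrix (Fin k) (Fin k) R)
    (hH1 : H 0 = 1)
    (hHherm : J H = H) :
    ∃ U : ℕ → Matrix (Fin k) (Fin k) R, U 0 = 1 ∧ smulS C (J U) U = H := by
  -- zero absorption for the cochains
  have hC0l : ∀ r (b : Matrix (Fin k) (Fin k) R), C r 0 b = 0 := by
    intro r b
    have h := haddl r 0 0 b
    rw [add_zero] at h
    exact (left_eq_add.mp h)
  have hC0r : ∀ r (a : Matrix (Fin k) (Fin k) R), C r a 0 = 0 := by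
    intro r a
    have h := haddr r a 0 0
    rw [add_zero] at h
    exact (left_eq_add.mp h)
  -- vanishing lemma for products
  have hvan : ∀ (s t : ℕ) (a b : ℕ → Matrix (Fin k) (Fin k) R),
      (∀ i, i < s → a i = 0) → (∀ j, j < t → b j = 0) → ∀ m, m < s + t → smulS C a b m = 0 := by
    intro s t a b ha hb m hm
    apply Finset.sum_eq_zero
    intro p hp
    rw [Finset.Nat.mem_antidiagonalTuple, Fin.sum_univ_three] at hp
    by_cases h1 : p 1 < s
    · rw [ha _ h1, hC0l]
    · have h2 : p 2 < t := by omega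
      rw [hb _ h2, hC0r]
  -- the product at degree m only depends on coefficients of degree ≤ m
  have hcong : ∀ (n : ℕ) (a a' b b' : ℕ → Matrix (Fin k) (Fin k) R),
      (∀ m, m ≤ n → a m = a' m) → (∀ m, m ≤ n → b m = b' m) →
      ∀ m, m ≤ n → smulS C a b m = smulS C a' b' m := by
    intro n a a' b b' ha hb m hm
    apply Finset.sum_congr rfl
    intro p hp
    rw [Finset.Nat.mem_antidiagonalTuple, Fin.sum_univ_three] at hp
    rw [ha (p 1) (by omega), hb (p 2) (by omega)]
  -- additivity of the product in each variable
  have hmull : ∀ (a a' b : ℕ → Matrix (Fin k) (Fin k) R),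
      smulS C (a + a') b = smulS C a b + smulS C a' b := by
    intro a a' b
    funext m
    simp only [smulS, Pi.add_apply, haddl]
    rw [Finset.sum_add_distrib]
  have hmulr : ∀ (a b b' : ℕ → Matrix (Fin k) (Fin k) R),
      smulS C a (b + b') = smulS C a b + smulS C a b' := by
    intro a b b'
    funext m
    simp only [smulS, Pi.add_apply, haddr]
    rw [Finset.sum_add_distrib]
  -- J preserves 0 and subtraction
  have hJzero : J 0 = 0 := by
    have h := hJadd 0 0
    rw [add_zero] at h
    exact (left_eq_add.mp h)
  have hJneg : ∀ a, J (-a) = - J a := by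
    intro a
    have h := hJadd a (-a)
    rw [add_neg_cancel, hJzero] at h
    exact (neg_eq_of_add_eq_zero_right h.symm).symm
  have hJsub : ∀ a b, J (a - b) = J a - J b := by
    intro a b
    rw [sub_eq_add_neg, hJadd, hJneg, sub_eq_add_neg]
  -- representation of a series vanishing at 0 as a shift
  have hrep : ∀ (a : ℕ → Matrix (Fin k) (Fin k) R), a 0 = 0 →
      a = lamShift (fun j => a (j+1)) := by
    intro a h
    funext m
    cases m with
    | zero => simp [lamShift, h]
    | succ j => simp [lamShift]
  -- leading coefficient of J a
  have hJlead : ∀ (n : ℕ) (a : ℕ → Matrix (Fin k) (Fin k) R),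
      (∀ m, m < n → a m = 0) → (J a) n = (a n).conjTranspose := by
    intro n
    induction n with
    | zero => intro a _; exact hJ0 a
    | succ n ih =>
      intro a ha
      rw [hrep a (ha 0 (Nat.succ_pos n)), hJshift]
      simp only [lamShift, Nat.succ_ne_zero, if_false, Nat.add_sub_cancel]
      exact ih _ (fun m hm => ha (m+1) (by omega))
  -- J preserves vanishing below n
  have hJvan : ∀ (n : ℕ) (a : ℕ → Matrix (Fin k) (Fin k) R),
      (∀ m, m < n → a m = 0) → ∀ m, m < n → (J a) m = 0 := by
    intro n
    induction n with
    | zero => intro a _ m hm; omega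
    | succ n ih =>
      intro a ha m hm
      rw [hrep a (ha 0 (Nat.succ_pos n)), hJshift]
      cases m with
      | zero => simp [lamShift]
      | succ j =>
        simp only [lamShift, Nat.succ_ne_zero, if_false, Nat.add_sub_cancel]
        exact ih _ (fun m hm' => ha (m+1) (by omega)) j (by omega)
  -- top-term lemmas
  have htopl : ∀ (n : ℕ) (a b : ℕ → Matrix (Fin k) (Fin k) R),
      (∀ i, i < n → a i = 0) → b 0 = 1 → smulS C a b n = a n := by
    intro n a b ha hb
    have hmem : (![0, n, 0] : Fin 3 → ℕ) ∈ Finset.Nat.antidiagonalTuple 3 n := by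
      rw [Finset.Nat.mem_antidiagonalTuple, Fin.sum_univ_three]; simp
    have h := Finset.sum_eq_single_of_mem (f := fun p : Fin 3 → ℕ => C (p 0) (a (p 1)) (b (p 2)))
      ![0, n, 0] hmem ?_
    · rw [smulS, h]; simp [hC0, hb]
    · intro q hq hne
      rw [Finset.Nat.mem_antidiagonalTuple, Fin.sum_univ_three] at hq
      show C (q 0) (a (q 1)) (b (q 2)) = 0
      by_cases h1 : q 1 < n
      · rw [ha _ h1, hC0l]
      · exfalso
        apply hne
        have e1 : q 1 = n := by omega
        have e0 : q 0 = 0 := by omega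
        have e2 : q 2 = 0 := by omega
        funext i
        fin_cases i <;> simp [e0, e1, e2]
  have htopr : ∀ (n : ℕ) (a b : ℕ → Matrix (Fin k) (Fin k) R),
      a 0 = 1 → (∀ j, j < n → b j = 0) → smulS C a b n = b n := by
    intro n a b ha hb
    have hmem : (![0, 0, n] : Fin 3 → ℕ) ∈ Finset.Nat.antidiagonalTuple 3 n := by
      rw [Finset.Nat.mem_antidiagonalTuple, Fin.sum_univ_three]; simp
    have h := Finset.sum_eq_single_of_mem (f := fun p : Fin 3 → ℕ => C (p 0) (a (p 1)) (b (p 2)))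
      ![0, 0, n] hmem ?_
    · rw [smulS, h]; simp [hC0, ha]
    · intro q hq hne
      rw [Finset.Nat.mem_antidiagonalTuple, Fin.sum_univ_three] at hq
      show C (q 0) (a (q 1)) (b (q 2)) = 0
      by_cases h2 : q 2 < n
      · rw [hb _ h2, hC0r]
      · exfalso
        apply hne
        have e2 : q 2 = n := by omega
        have e0 : q 0 = 0 := by omega
        have e1 : q 1 = 0 := by omega
        funext i
        fin_cases i <;> simp [e0, e1, e2]
  -- the invariant for the approximants
  have hinv : ∀ n : ℕ, (VS C J H n) 0 = 1 ∧
      ∀ m, m ≤ n → smulS C (J (VS C J H n)) (VS C J H n) m = H m := by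
    intro n
    induction n with
    | zero =>
      constructor
      · simp [VS, oneS]
      · intro m hm
        have hm0 : m = 0 := by omega
        subst hm0
        have hV0 : VS C J H 0 = (oneS : ℕ → Matrix (Fin k) (Fin k) R) := rfl
        have h1 : (oneS : ℕ → Matrix (Fin k) (Fin k) R) 0 = 1 := by simp [oneS]
        rw [hV0, htopl 0 (J oneS) oneS (fun i hi => by omega) h1]
        rw [hJ0, h1, Matrix.conjTranspose_one, hH1]
    | succ n ih =>
      obtain ⟨ihW0, ihW⟩ := ih
      set W := VS C J H n with hW
      set S := stepS C J H W n with hSdef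
      set E : Matrix (Fin k) (Fin k) R := (1/2 : ℚ) • (H (n+1) - smulS C (J W) W (n+1)) with hE
      have hSvan : ∀ m, m < n + 1 → S m = 0 := by
        intro m hm
        simp only [hSdef, stepS]
        rw [if_neg (by omega)]
      have hStop : S (n+1) = E := by
        simp [hSdef, stepS, hE]
      have hJSvan : ∀ m, m < n + 1 → (J S) m = 0 := hJvan (n+1) S hSvan
      have hJStop : (J S) (n+1) = E.conjTranspose := by
        rw [hJlead (n+1) S hSvan, hStop]
      -- Hermiticity of the defect
      have hD : J (H - smulS C (J W) W) = H - smulS C (J W) W := by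
        rw [hJsub, hHherm, hJmul, hJinvol]
      have hDvan : ∀ m, m < n + 1 → (H - smulS C (J W) W) m = 0 := by
        intro m hm
        simp only [Pi.sub_apply]
        rw [ihW m (by omega), sub_self]
      have hDherm : ((H - smulS C (J W) W) (n+1)).conjTranspose
          = (H - smulS C (J W) W) (n+1) := by
        have h := hJlead (n+1) _ hDvan
        rw [hD] at h
        exact h.symm
      have hEE : E.conjTranspose + E = H (n+1) - smulS C (J W) W (n+1) := by
        have hD' : (H (n+1) - smulS C (J W) W (n+1)).conjTranspose
            = H (n+1) - smulS C (J W) W (n+1) := hDherm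
        rw [hE, star_half_smul, hD', ← add_smul]
        norm_num
      have hVsucc : VS C J H (n+1) = W + S := by rw [VS_succ]
      have hJW0 : (J W) 0 = 1 := by rw [hJ0, ihW0, Matrix.conjTranspose_one]
      constructor
      · rw [hVsucc]
        simp only [Pi.add_apply]
        rw [ihW0, hSvan 0 (by omega), add_zero]
      · intro m hm
        rw [hVsucc, hJadd, hmull, hmulr, hmulr]
        simp only [Pi.add_apply]
        rcases Nat.lt_or_ge m (n+1) with hlt | hge
        · rw [hvan 0 (n+1) (J W) S (fun i hi => by omega) hSvan m (by omega)]
          rw [hvan (n+1) 0 (J S) W hJSvan (fun j hj => by omega) m (by omega)]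
          rw [hvan (n+1) (n+1) (J S) S hJSvan hSvan m (by omega)]
          rw [add_zero, add_zero, add_zero]
          exact ihW m (by omega)
        · have hm1 : m = n + 1 := by omega
          subst hm1
          rw [htopr (n+1) (J W) S hJW0 hSvan, hStop]
          rw [htopl (n+1) (J S) W hJSvan ihW0, hJStop]
          rw [hvan (n+1) (n+1) (J S) S hJSvan hSvan (n+1) (by omega)]
          rw [add_zero]
          have : smulS C (J W) W (n + 1) + E + E.conjTranspose
              = smulS C (J W) W (n + 1) + (E.conjTranspose + E) := by abel
          rw [this, hEE]
          abel
  -- stability of the approximants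
  have hstab : ∀ n m : ℕ, m ≤ n → VS C J H n m = VS C J H m m := by
    intro n
    induction n with
    | zero =>
      intro m hm
      have hm0 : m = 0 := by omega
      subst hm0
      rfl
    | succ n ih =>
      intro m hm
      rcases Nat.lt_or_ge m (n+1) with hlt | hge
      · rw [VS_succ]
        simp only [Pi.add_apply]
        have : stepS C J H (VS C J H n) n m = 0 := by
          simp only [stepS]; rw [if_neg (by omega)]
        rw [this, add_zero]
        exact ih m (by omega)
      · have : m = n + 1 := by omega
        subst this; rfl
  -- the square root
  refine ⟨fun m => VS C J H m m, ?_, ?_⟩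
  · have h := (hinv 0).1
    exact h
  · funext m
    set U : ℕ → Matrix (Fin k) (Fin k) R := fun j => VS C J H j j with hU
    have hagree : ∀ j, j ≤ m → U j = VS C J H m j := by
      intro j hj
      exact (hstab m j hj).symm
    have hdiff : ∀ j, j < m + 1 → (U - VS C J H m) j = 0 := by
      intro j hj
      simp only [Pi.sub_apply]
      rw [hagree j (by omega), sub_self]
    have hJagree : ∀ j, j ≤ m → (J U) j = (J (VS C J H m)) j := by
      intro j hj
      have h := hJvan (m+1) _ hdiff j (by omega)
      rw [hJsub] at h
      simp only [Pi.sub_apply] at h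
      exact sub_eq_zero.mp h
    rw [hcong m (J U) (J (VS C J H m)) U (VS C J H m) hJagree hagree m le_rfl]
    exact (hinv m).2 m le_rfl
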